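/- Let ω₁, ω₂ > 0 and let T² be the topological 2-torus (ℝ/ω₁ℤ) × (ℝ/ω₂ℤ). Let ∼ be the equivalence relation on T² identifying each point (θ₁,θ₂) with its image (−θ₁, ω₂/2−θ₂) under the involution σ₁. Then the quotient space T²/∼, with the quotient topology, is homeomorphic to the unit 2-sphere S² = {x ∈ ℝ³ : |x| = 1}. -/

import Mathlib

/-- The involution `σ₁(θ₁,θ₂) = (−θ₁, ω₂/2−θ₂)` of the torus `(ℝ/ω₁ℤ) × (ℝ/ω₂ℤ)`. -/
noncomputable def torusInvol (ω₁ ω₂ : ℝ) (p : AddCircle ω₁ × AddCircle ω₂) :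
    AddCircle ω₁ × AddCircle ω₂ :=
  (-p.1, ((ω₂ / 2 : ℝ) : AddCircle ω₂) - p.2)

/-- The relation identifying each point of the torus with its image under `σ₁`. -/
def torusRel (ω₁ ω₂ : ℝ) (p q : AddCircle ω₁ × AddCircle ω₂) : Prop :=
  q = p ∨ q = torusInvol ω₁ ω₂ p

namespace SphAux

open Complex

variable (ω₁ ω₂ : ℝ)

noncomputable def fA (p : AddCircle ω₁ × AddCircle ω₂) : ℝ := ((AddCircle.toCircle p.1 : ℂ)).re
noncomputable def fC (p : AddCircle ω₁ × AddCircle ω₂) : ℝ := ((AddCircle.toCircle p.2 : ℂ)).im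
noncomputable def fE (p : AddCircle ω₁ × AddCircle ω₂) : ℝ :=
  -(((AddCircle.toCircle p.1 : ℂ)).im * ((AddCircle.toCircle p.2 : ℂ)).re)

lemma unit1 (p : AddCircle ω₁ × AddCircle ω₂) :
    fA ω₁ ω₂ p ^ 2 + ((AddCircle.toCircle p.1 : ℂ)).im ^ 2 = 1 := by
  have := Circle.normSq_coe (AddCircle.toCircle p.1)
  rw [Complex.normSq_apply] at this
  simp only [fA, pow_two]
  linarith

lemma unit2 (p : AddCircle ω₁ × AddCircle ω₂) :
    ((AddCircle.toCircle p.2 : ℂ)).re ^ 2 + fC ω₁ ω₂ p ^ 2 = 1 := by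
  have := Circle.normSq_coe (AddCircle.toCircle p.2)
  rw [Complex.normSq_apply] at this
  simp only [fC, pow_two]
  linarith

lemma fA_sq_le_one (p : AddCircle ω₁ × AddCircle ω₂) : fA ω₁ ω₂ p ^ 2 ≤ 1 := by
  nlinarith [unit1 ω₁ ω₂ p, sq_nonneg ((AddCircle.toCircle p.1 : ℂ)).im]

lemma fC_sq_le_one (p : AddCircle ω₁ × AddCircle ω₂) : fC ω₁ ω₂ p ^ 2 ≤ 1 := by
  nlinarith [unit2 ω₁ ω₂ p, sq_nonneg ((AddCircle.toCircle p.2 : ℂ)).re]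

lemma fE_sq (p : AddCircle ω₁ × AddCircle ω₂) :
    fE ω₁ ω₂ p ^ 2 = (1 - fA ω₁ ω₂ p ^ 2) * (1 - fC ω₁ ω₂ p ^ 2) := by
  have h1 := unit1 ω₁ ω₂ p
  have h2 := unit2 ω₁ ω₂ p
  simp only [fE]
  nlinarith [h1, h2]

lemma sum_sq (p : AddCircle ω₁ × AddCircle ω₂) :
    fA ω₁ ω₂ p ^ 2 + fC ω₁ ω₂ p ^ 2 + fE ω₁ ω₂ p ^ 2
      = 1 + fA ω₁ ω₂ p ^ 2 * fC ω₁ ω₂ p ^ 2 := by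
  nlinarith [fE_sq ω₁ ω₂ p]

noncomputable def fN (p : AddCircle ω₁ × AddCircle ω₂) : ℝ :=
  Real.sqrt (fA ω₁ ω₂ p ^ 2 + fC ω₁ ω₂ p ^ 2 + fE ω₁ ω₂ p ^ 2)

lemma one_le_fN (p : AddCircle ω₁ × AddCircle ω₂) : 1 ≤ fN ω₁ ω₂ p := by
  rw [fN, sum_sq]
  calc (1:ℝ) = Real.sqrt 1 := Real.sqrt_one.symm
    _ ≤ _ := Real.sqrt_le_sqrt (by nlinarith [sq_nonneg (fA ω₁ ω₂ p * fC ω₁ ω₂ p)])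

lemma fN_pos (p : AddCircle ω₁ × AddCircle ω₂) : 0 < fN ω₁ ω₂ p :=
  lt_of_lt_of_le one_pos (one_le_fN ω₁ ω₂ p)

lemma fN_sq (p : AddCircle ω₁ × AddCircle ω₂) :
    fN ω₁ ω₂ p ^ 2 = fA ω₁ ω₂ p ^ 2 + fC ω₁ ω₂ p ^ 2 + fE ω₁ ω₂ p ^ 2 :=
  Real.sq_sqrt (by nlinarith [sum_sq ω₁ ω₂ p, sq_nonneg (fA ω₁ ω₂ p * fC ω₁ ω₂ p)])

noncomputable def sphMap (p : AddCircle ω₁ × AddCircle ω₂) : EuclideanSpace ℝ (Fin 3) :=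
  (WithLp.equiv 2 (Fin 3 → ℝ)).symm
    ![fA ω₁ ω₂ p / fN ω₁ ω₂ p, fC ω₁ ω₂ p / fN ω₁ ω₂ p, fE ω₁ ω₂ p / fN ω₁ ω₂ p]

lemma sphMap_apply (p : AddCircle ω₁ × AddCircle ω₂) (i : Fin 3) :
    sphMap ω₁ ω₂ p i = ![fA ω₁ ω₂ p / fN ω₁ ω₂ p, fC ω₁ ω₂ p / fN ω₁ ω₂ p,
      fE ω₁ ω₂ p / fN ω₁ ω₂ p] i := rfl

lemma continuous_sphMap : Continuous (sphMap ω₁ ω₂) := by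
  have h1 : Continuous fun p : AddCircle ω₁ × AddCircle ω₂ => (AddCircle.toCircle p.1 : ℂ) :=
    continuous_subtype_val.comp (AddCircle.continuous_toCircle.comp continuous_fst)
  have h2 : Continuous fun p : AddCircle ω₁ × AddCircle ω₂ => (AddCircle.toCircle p.2 : ℂ) :=
    continuous_subtype_val.comp (AddCircle.continuous_toCircle.comp continuous_snd)
  have ha : Continuous (fA ω₁ ω₂) := Complex.continuous_re.comp h1
  have hc : Continuous (fC ω₁ ω₂) := Complex.continuous_im.comp h2
  have he : Continuous (fE ω₁ ω₂) :=
    ((Complex.continuous_im.comp h1).mul (Complex.continuous_re.comp h2)).neg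
  have hn : Continuous (fN ω₁ ω₂) := ((((ha.pow 2).add (hc.pow 2)).add (he.pow 2))).sqrt
  have hN : ∀ p, fN ω₁ ω₂ p ≠ 0 := fun p => (fN_pos ω₁ ω₂ p).ne'
  refine (PiLp.continuous_toLp 2 fun _ : Fin 3 => ℝ).comp ?_
  refine continuous_pi fun i => ?_
  fin_cases i
  · exact ha.div hn hN
  · exact hc.div hn hN
  · exact he.div hn hN

lemma norm_sphMap (p : AddCircle ω₁ × AddCircle ω₂) : ‖sphMap ω₁ ω₂ p‖ = 1 := by
  have hN := fN_pos ω₁ ω₂ p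
  rw [EuclideanSpace.norm_eq]
  simp only [sphMap, WithLp.equiv_symm_apply, PiLp.toLp_apply]
  rw [Fin.sum_univ_three]
  simp only [Matrix.cons_val_zero, Matrix.cons_val_one, Matrix.head_cons, Matrix.cons_val_two,
    Matrix.tail_cons, Real.norm_eq_abs]
  rw [_root_.sq_abs, _root_.sq_abs, _root_.sq_abs]
  have : (fA ω₁ ω₂ p / fN ω₁ ω₂ p) ^ 2 + (fC ω₁ ω₂ p / fN ω₁ ω₂ p) ^ 2
      + (fE ω₁ ω₂ p / fN ω₁ ω₂ p) ^ 2 = 1 := by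
    field_simp
    linarith [fN_sq ω₁ ω₂ p]
  rw [this, Real.sqrt_one]

lemma toCircle_neg {T : ℝ} (x : AddCircle T) :
    AddCircle.toCircle (-x) = (AddCircle.toCircle x)⁻¹ := by
  have h : AddCircle.toCircle (-x) * AddCircle.toCircle x = 1 := by
    rw [← AddCircle.toCircle_add, neg_add_cancel, AddCircle.toCircle_zero]
  exact eq_inv_of_mul_eq_one_left h

lemma coe_toCircle_neg {T : ℝ} (x : AddCircle T) :
    ((AddCircle.toCircle (-x) : ℂ)) = starRingEnd ℂ (AddCircle.toCircle x : ℂ) := by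
  rw [toCircle_neg, Circle.coe_inv_eq_conj]

lemma toCircle_half (hω : ω₂ ≠ 0) :
    ((AddCircle.toCircle ((ω₂ / 2 : ℝ) : AddCircle ω₂) : ℂ)) = -1 := by
  rw [AddCircle.toCircle_apply_mk, Circle.coe_exp]
  have : 2 * Real.pi / ω₂ * (ω₂ / 2) = Real.pi := by field_simp
  rw [this]
  exact_mod_cast Complex.exp_pi_mul_I

lemma coe_toCircle_invol₂ (hω : ω₂ ≠ 0) (p : AddCircle ω₁ × AddCircle ω₂) :
    ((AddCircle.toCircle (torusInvol ω₁ ω₂ p).2 : ℂ)) =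
      -starRingEnd ℂ (AddCircle.toCircle p.2 : ℂ) := by
  show ((AddCircle.toCircle (((ω₂ / 2 : ℝ) : AddCircle ω₂) - p.2) : ℂ)) = _
  rw [sub_eq_add_neg, AddCircle.toCircle_add, Circle.coe_mul, toCircle_half ω₂ hω,
    toCircle_neg, Circle.coe_inv_eq_conj]
  ring

lemma coords_invol (hω : ω₂ ≠ 0) (p : AddCircle ω₁ × AddCircle ω₂) :
    fA ω₁ ω₂ (torusInvol ω₁ ω₂ p) = fA ω₁ ω₂ p ∧
    fC ω₁ ω₂ (torusInvol ω₁ ω₂ p) = fC ω₁ ω₂ p ∧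
    fE ω₁ ω₂ (torusInvol ω₁ ω₂ p) = fE ω₁ ω₂ p := by
  have h1 : ((AddCircle.toCircle (torusInvol ω₁ ω₂ p).1 : ℂ)) =
      starRingEnd ℂ (AddCircle.toCircle p.1 : ℂ) := coe_toCircle_neg p.1
  have h2 := coe_toCircle_invol₂ ω₁ ω₂ hω p
  refine ⟨?_, ?_, ?_⟩ <;> simp [fA, fC, fE, h1, h2]

lemma sphMap_invol (hω : ω₂ ≠ 0) (p : AddCircle ω₁ × AddCircle ω₂) :
    sphMap ω₁ ω₂ (torusInvol ω₁ ω₂ p) = sphMap ω₁ ω₂ p := by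
  obtain ⟨ha, hc, he⟩ := coords_invol ω₁ ω₂ hω p
  unfold sphMap fN
  rw [ha, hc, he]

lemma fN_eq_of_sphMap_eq {p q : AddCircle ω₁ × AddCircle ω₂}
    (ha : fA ω₁ ω₂ p * fN ω₁ ω₂ q = fA ω₁ ω₂ q * fN ω₁ ω₂ p)
    (hc : fC ω₁ ω₂ p * fN ω₁ ω₂ q = fC ω₁ ω₂ q * fN ω₁ ω₂ p) :
    fN ω₁ ω₂ p = fN ω₁ ω₂ q := by
  set a := fA ω₁ ω₂ p; set c := fC ω₁ ω₂ p
  set a' := fA ω₁ ω₂ q; set c' := fC ω₁ ω₂ q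
  set n := fN ω₁ ω₂ p; set m := fN ω₁ ω₂ q
  have hn2 : n ^ 2 = 1 + a ^ 2 * c ^ 2 := by rw [fN_sq]; exact sum_sq ω₁ ω₂ p
  have hm2 : m ^ 2 = 1 + a' ^ 2 * c' ^ 2 := by rw [fN_sq]; exact sum_sq ω₁ ω₂ q
  have hnpos : 0 < n := fN_pos ω₁ ω₂ p
  have hmpos : 0 < m := fN_pos ω₁ ω₂ q
  have ha2 : a ^ 2 * m ^ 2 = a' ^ 2 * n ^ 2 := by linear_combination (a * m + a' * n) * ha
  have hc2 : c ^ 2 * m ^ 2 = c' ^ 2 * n ^ 2 := by linear_combination (c * m + c' * n) * hc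
  have key : (n ^ 2 - 1) * m ^ 4 = (m ^ 2 - 1) * n ^ 4 := by
    linear_combination m ^ 4 * hn2 - n ^ 4 * hm2 + c ^ 2 * m ^ 2 * ha2 + a' ^ 2 * n ^ 2 * hc2
  have fac : (m ^ 2 - n ^ 2) * (n ^ 2 * m ^ 2 - n ^ 2 - m ^ 2) = 0 := by
    linear_combination key
  have hsq : n ^ 2 = m ^ 2 := by
    rcases mul_eq_zero.mp fac with h | h
    · linarith
    · -- (n²−1)(m²−1) = 1 with both factors in [0,1]
      have huv : (n ^ 2 - 1) * (m ^ 2 - 1) = 1 := by linear_combination h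
      have hu1 : n ^ 2 - 1 ≤ 1 := by
        nlinarith [fA_sq_le_one ω₁ ω₂ p, fC_sq_le_one ω₁ ω₂ p, sq_nonneg a, sq_nonneg c]
      have hv1 : m ^ 2 - 1 ≤ 1 := by
        nlinarith [fA_sq_le_one ω₁ ω₂ q, fC_sq_le_one ω₁ ω₂ q, sq_nonneg a', sq_nonneg c']
      have hu0 : 0 ≤ n ^ 2 - 1 := by nlinarith [sq_nonneg a, sq_nonneg c, sq_nonneg (a*c)]
      have hv0 : 0 ≤ m ^ 2 - 1 := by nlinarith [sq_nonneg (a'*c')]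
      have : n ^ 2 - 1 ≥ 1 := by nlinarith
      have : m ^ 2 - 1 ≥ 1 := by nlinarith
      nlinarith
  nlinarith [hsq, hnpos, hmpos]

lemma circle_eq_of (u v : Circle) (h : (u : ℂ) = (v : ℂ)) : u = v := Circle.ext h

lemma complex_case {z z' w w' : ℂ}
    (uz : z.re ^ 2 + z.im ^ 2 = 1) (uz' : z'.re ^ 2 + z'.im ^ 2 = 1)
    (uw : w.re ^ 2 + w.im ^ 2 = 1) (uw' : w'.re ^ 2 + w'.im ^ 2 = 1)
    (h1 : z'.re = z.re) (h2 : w'.im = w.im) (h3 : z'.im * w'.re = z.im * w.re) :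
    (z' = z ∧ w' = w) ∨ (z' = starRingEnd ℂ z ∧ w' = -starRingEnd ℂ w) := by
  have hre2 : z'.re ^ 2 = z.re ^ 2 := by rw [h1]
  have hBsq : z'.im ^ 2 = z.im ^ 2 := by linarith
  have hwre2 : w'.im ^ 2 = w.im ^ 2 := by rw [h2]
  have hDsq : w'.re ^ 2 = w.re ^ 2 := by linarith
  have hB : z'.im = z.im ∨ z'.im = -z.im := sq_eq_sq_iff_eq_or_eq_neg.mp hBsq
  have hD : w'.re = w.re ∨ w'.re = -w.re := sq_eq_sq_iff_eq_or_eq_neg.mp hDsq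
  have case_p : z'.im = z.im → w'.re = w.re → (z' = z ∧ w' = w) := by
    intro hb hd
    exact ⟨Complex.ext h1 hb, Complex.ext hd h2⟩
  have case_i : z'.im = -z.im → w'.re = -w.re →
      (z' = starRingEnd ℂ z ∧ w' = -starRingEnd ℂ w) := by
    intro hb hd
    constructor
    · apply Complex.ext <;> simp [h1, hb]
    · apply Complex.ext <;> simp [hd, h2]
  rcases hB with hb | hb <;> rcases hD with hd | hd
  · exact Or.inl (case_p hb hd)
  · have hz : z.im * w.re = 0 := by
      have h3' := h3
      rw [hb, hd] at h3'
      nlinarith [h3', sq_nonneg (z.im * w.re), sq_nonneg (z.im + w.re)]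
    rcases mul_eq_zero.mp hz with h' | h'
    · exact Or.inr (case_i (by rw [hb, h', neg_zero]) hd)
    · exact Or.inl (case_p hb (by rw [hd, h', neg_zero]))
  · have hz : z.im * w.re = 0 := by
      have h3' := h3
      rw [hb, hd] at h3'
      nlinarith [h3', sq_nonneg (z.im * w.re), sq_nonneg (z.im + w.re)]
    rcases mul_eq_zero.mp hz with h' | h'
    · exact Or.inl (case_p (by rw [hb, h', neg_zero]) hd)
    · exact Or.inr (case_i hb (by rw [hd, h', neg_zero]))
  · exact Or.inr (case_i hb hd)

lemma inj_aux (hω₁ : ω₁ ≠ 0) (hω₂ : ω₂ ≠ 0) {p q : AddCircle ω₁ × AddCircle ω₂}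
    (h : sphMap ω₁ ω₂ p = sphMap ω₁ ω₂ q) : q = p ∨ q = torusInvol ω₁ ω₂ p := by
  have hnp := fN_pos ω₁ ω₂ p
  have hnq := fN_pos ω₁ ω₂ q
  have h0 : fA ω₁ ω₂ p / fN ω₁ ω₂ p = fA ω₁ ω₂ q / fN ω₁ ω₂ q := by
    have := congrArg (fun v : EuclideanSpace ℝ (Fin 3) => v 0) h
    simpa [sphMap_apply] using this
  have h1 : fC ω₁ ω₂ p / fN ω₁ ω₂ p = fC ω₁ ω₂ q / fN ω₁ ω₂ q := by
    have := congrArg (fun v : EuclideanSpace ℝ (Fin 3) => v 1) h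
    simpa [sphMap_apply] using this
  have h2 : fE ω₁ ω₂ p / fN ω₁ ω₂ p = fE ω₁ ω₂ q / fN ω₁ ω₂ q := by
    have := congrArg (fun v : EuclideanSpace ℝ (Fin 3) => v 2) h
    simpa [sphMap_apply] using this
  rw [div_eq_div_iff hnp.ne' hnq.ne'] at h0 h1 h2
  have hn : fN ω₁ ω₂ p = fN ω₁ ω₂ q := fN_eq_of_sphMap_eq ω₁ ω₂ h0 h1
  rw [hn] at h0 h1 h2
  have ha : fA ω₁ ω₂ p = fA ω₁ ω₂ q := mul_right_cancel₀ hnq.ne' h0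
  have hc : fC ω₁ ω₂ p = fC ω₁ ω₂ q := mul_right_cancel₀ hnq.ne' h1
  have he : fE ω₁ ω₂ p = fE ω₁ ω₂ q := mul_right_cancel₀ hnq.ne' h2
  have uz := unit1 ω₁ ω₂ p
  have uz' := unit1 ω₁ ω₂ q
  have uw := unit2 ω₁ ω₂ p
  have uw' := unit2 ω₁ ω₂ q
  simp only [fA] at uz uz' ha
  simp only [fC] at uw uw' hc
  simp only [fE, neg_inj] at he
  have main := complex_case uz uz' uw uw' ha.symm hc.symm he.symm
  rcases main with ⟨e1, e2⟩ | ⟨e1, e2⟩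
  · left
    refine Prod.ext ?_ ?_
    · exact AddCircle.injective_toCircle hω₁ (circle_eq_of _ _ e1)
    · exact AddCircle.injective_toCircle hω₂ (circle_eq_of _ _ e2)
  · right
    refine Prod.ext ?_ ?_
    · refine AddCircle.injective_toCircle hω₁ (circle_eq_of _ _ ?_)
      rw [show (torusInvol ω₁ ω₂ p).1 = -p.1 from rfl, coe_toCircle_neg]
      exact e1
    · refine AddCircle.injective_toCircle hω₂ (circle_eq_of _ _ ?_)
      rw [coe_toCircle_invol₂ ω₁ ω₂ hω₂ p]
      exact e2

-- Step 1: the scaling factor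
lemma scale_exists (x y z : ℝ) (hunit : x ^ 2 + y ^ 2 + z ^ 2 = 1) :
    ∃ l : ℝ, 0 < l ∧ (l * x) ^ 2 ≤ 1 ∧ (l * y) ^ 2 ≤ 1 ∧
      (l * z) ^ 2 = (1 - (l * x) ^ 2) * (1 - (l * y) ^ 2) := by
  by_cases h0 : x = 0 ∧ y = 0
  · obtain ⟨hx0, hy0⟩ := h0
    subst hx0; subst hy0
    refine ⟨1, one_pos, by norm_num, by norm_num, ?_⟩
    linear_combination hunit
  · set m := max |x| |y| with hm
    have hxm : |x| ≤ m := le_max_left _ _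
    have hym : |y| ≤ m := le_max_right _ _
    have hmpos : 0 < m := by
      rcases not_and_or.mp h0 with h | h
      · exact lt_of_lt_of_le (abs_pos.mpr h) hxm
      · exact lt_of_lt_of_le (abs_pos.mpr h) hym
    set g : ℝ → ℝ := fun l => (1 - l ^ 2 * x ^ 2) * (1 - l ^ 2 * y ^ 2) - l ^ 2 * z ^ 2 with hg
    have hcont : ContinuousOn g (Set.Icc 0 (1 / m)) := by fun_prop
    have hg0 : g 0 = 1 := by simp [hg]
    have hmsq : (1 / m) ^ 2 * m ^ 2 = 1 := by field_simp
    have hgm : g (1 / m) ≤ 0 := by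
      have hzn : (0:ℝ) ≤ (1 / m) ^ 2 * z ^ 2 := by positivity
      have hge : g (1 / m) = (1 - (1/m) ^ 2 * x ^ 2) * (1 - (1/m) ^ 2 * y ^ 2)
          - (1/m) ^ 2 * z ^ 2 := rfl
      rcases max_choice |x| |y| with h | h
      · have hx2 : x ^ 2 = m ^ 2 := by rw [hm, h, _root_.sq_abs]
        have hfac : (1 - (1/m) ^ 2 * x ^ 2) = 0 := by rw [hx2]; linarith [hmsq]
        rw [hge, hfac, zero_mul, zero_sub]
        linarith [hzn]
      · have hy2 : y ^ 2 = m ^ 2 := by rw [hm, h, _root_.sq_abs]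
        have hfac : (1 - (1/m) ^ 2 * y ^ 2) = 0 := by rw [hy2]; linarith [hmsq]
        rw [hge, hfac, mul_zero, zero_sub]
        linarith [hzn]
    have h01m : (0 : ℝ) ≤ 1 / m := by positivity
    have hIVT := intermediate_value_Icc' h01m hcont
    have hmem : (0 : ℝ) ∈ Set.Icc (g (1 / m)) (g 0) := ⟨hgm, by rw [hg0]; norm_num⟩
    obtain ⟨l, hl, hgl⟩ := hIVT hmem
    have hlne : l ≠ 0 := by
      intro h'
      rw [h', hg0] at hgl
      norm_num at hgl
    have hlpos : 0 < l := lt_of_le_of_ne hl.1 (Ne.symm hlne)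
    have hlm : l ≤ 1 / m := hl.2
    have hlsq : l ^ 2 ≤ (1 / m) ^ 2 := by nlinarith [hlm, hlpos]
    have hx1 : (l * x) ^ 2 ≤ 1 := by
      have hxx : x ^ 2 ≤ m ^ 2 := by nlinarith [hxm, abs_nonneg x, _root_.sq_abs x]
      have h2 : l ^ 2 * x ^ 2 ≤ (1 / m) ^ 2 * m ^ 2 :=
        mul_le_mul hlsq hxx (sq_nonneg x) (by positivity)
      rw [mul_pow]
      linarith [hmsq]
    have hy1 : (l * y) ^ 2 ≤ 1 := by
      have hyy : y ^ 2 ≤ m ^ 2 := by nlinarith [hym, abs_nonneg y, _root_.sq_abs y]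
      have h2 : l ^ 2 * y ^ 2 ≤ (1 / m) ^ 2 * m ^ 2 :=
        mul_le_mul hlsq hyy (sq_nonneg y) (by positivity)
      rw [mul_pow]
      linarith [hmsq]
    refine ⟨l, hlpos, hx1, hy1, ?_⟩
    have hz : (1 - l ^ 2 * x ^ 2) * (1 - l ^ 2 * y ^ 2) - l ^ 2 * z ^ 2 = 0 := hgl
    nlinarith [hz]

-- Step 2: realizing coordinates on the circle
lemma circle_point (a b : ℝ) (ha : a ^ 2 ≤ 1) (hb : b = Real.sqrt (1 - a ^ 2)) :
    ∃ u : Circle, (u : ℂ).re = a ∧ (u : ℂ).im = b := by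
  have ha' : -1 ≤ a ∧ a ≤ 1 := abs_le.mp (abs_le_one_iff_mul_self_le_one.mpr (by nlinarith))
  refine ⟨Circle.exp (Real.arccos a), ?_, ?_⟩
  · rw [Circle.coe_exp, Complex.exp_ofReal_mul_I_re]
    exact Real.cos_arccos ha'.1 ha'.2
  · rw [Circle.coe_exp, Complex.exp_ofReal_mul_I_im, Real.sin_arccos, hb]

lemma circle_point' (c d : ℝ) (hd2 : d ^ 2 = 1 - c ^ 2) :
    ∃ u : Circle, (u : ℂ).re = d ∧ (u : ℂ).im = c := by
  have hc : c ^ 2 ≤ 1 := by nlinarith [sq_nonneg d]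
  have hd : d ^ 2 ≤ 1 := by nlinarith [sq_nonneg c]
  have hd' : -1 ≤ d ∧ d ≤ 1 := abs_le.mp (abs_le_one_iff_mul_self_le_one.mpr (by nlinarith))
  by_cases hc0 : 0 ≤ c
  · refine ⟨Circle.exp (Real.arccos d), ?_, ?_⟩
    · rw [Circle.coe_exp, Complex.exp_ofReal_mul_I_re]
      exact Real.cos_arccos hd'.1 hd'.2
    · rw [Circle.coe_exp, Complex.exp_ofReal_mul_I_im, Real.sin_arccos]
      rw [show 1 - d ^ 2 = c ^ 2 by linarith]
      rw [Real.sqrt_sq_eq_abs, _root_.abs_of_nonneg hc0]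
  · refine ⟨Circle.exp (-Real.arccos d), ?_, ?_⟩
    · rw [Circle.coe_exp, Complex.exp_ofReal_mul_I_re, Real.cos_neg]
      exact Real.cos_arccos hd'.1 hd'.2
    · rw [Circle.coe_exp, Complex.exp_ofReal_mul_I_im, Real.sin_neg, Real.sin_arccos]
      rw [show 1 - d ^ 2 = c ^ 2 by linarith]
      rw [Real.sqrt_sq_eq_abs, _root_.abs_of_neg (lt_of_not_ge hc0), neg_neg]


lemma surj_aux (hω₁ : ω₁ ≠ 0) (hω₂ : ω₂ ≠ 0) (v : EuclideanSpace ℝ (Fin 3))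
    (hv : ‖v‖ = 1) : ∃ p, sphMap ω₁ ω₂ p = v := by
  have hunit : v 0 ^ 2 + v 1 ^ 2 + v 2 ^ 2 = 1 := by
    rw [EuclideanSpace.norm_eq, Fin.sum_univ_three] at hv
    have h1 : ‖v 0‖ ^ 2 + ‖v 1‖ ^ 2 + ‖v 2‖ ^ 2 = 1 := by
      have := Real.sqrt_eq_one.mp hv
      linarith [this]
    simpa [Real.norm_eq_abs, _root_.sq_abs] using h1
  obtain ⟨l, hl, hx1, hy1, he2⟩ := scale_exists (v 0) (v 1) (v 2) hunit
  set a := l * v 0 with hadef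
  set c := l * v 1 with hcdef
  set e := l * v 2 with hedef
  set b := Real.sqrt (1 - a ^ 2) with hbdef
  have hb2 : b ^ 2 = 1 - a ^ 2 := Real.sq_sqrt (by linarith [hx1])
  obtain ⟨d, hd2, hbd⟩ : ∃ d, d ^ 2 = 1 - c ^ 2 ∧ -(b * d) = e := by
    by_cases hb0 : b = 0
    · refine ⟨Real.sqrt (1 - c ^ 2), Real.sq_sqrt (by linarith [hy1]), ?_⟩
      have ha2 : a ^ 2 = 1 := by
        have hbb := hb2
        rw [hb0] at hbb
        nlinarith [hbb]
      have he0 : e = 0 := by nlinarith [he2, ha2]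
      rw [hb0, he0]
      ring
    · refine ⟨-e / b, ?_, ?_⟩
      · rw [div_pow, div_eq_iff (pow_ne_zero 2 hb0)]
        linear_combination he2 - (1 - c ^ 2) * hb2
      · field_simp
  obtain ⟨z0, hz0re, hz0im⟩ := circle_point a b hx1 hbdef
  obtain ⟨w0, hw0re, hw0im⟩ := circle_point' c d hd2
  obtain ⟨θ₁, hθ₁⟩ := (AddCircle.homeomorphCircle hω₁).surjective z0
  rw [AddCircle.homeomorphCircle_apply] at hθ₁
  obtain ⟨θ₂, hθ₂⟩ := (AddCircle.homeomorphCircle hω₂).surjective w0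
  rw [AddCircle.homeomorphCircle_apply] at hθ₂
  refine ⟨(θ₁, θ₂), ?_⟩
  have hfa : fA ω₁ ω₂ (θ₁, θ₂) = a := by
    show ((AddCircle.toCircle θ₁ : ℂ)).re = a
    rw [hθ₁, hz0re]
  have hfc : fC ω₁ ω₂ (θ₁, θ₂) = c := by
    show ((AddCircle.toCircle θ₂ : ℂ)).im = c
    rw [hθ₂, hw0im]
  have hfe : fE ω₁ ω₂ (θ₁, θ₂) = e := by
    show -(((AddCircle.toCircle θ₁ : ℂ)).im * ((AddCircle.toCircle θ₂ : ℂ)).re) = e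
    rw [hθ₁, hθ₂, hz0im, hw0re]
    exact hbd
  have hsum : fA ω₁ ω₂ (θ₁, θ₂) ^ 2 + fC ω₁ ω₂ (θ₁, θ₂) ^ 2 + fE ω₁ ω₂ (θ₁, θ₂) ^ 2
      = l ^ 2 := by
    rw [hfa, hfc, hfe, hadef, hcdef, hedef]
    linear_combination l ^ 2 * hunit
  have hfn : fN ω₁ ω₂ (θ₁, θ₂) = l := by
    rw [fN, hsum]
    exact Real.sqrt_sq hl.le
  ext i
  fin_cases i
  · show fA ω₁ ω₂ (θ₁, θ₂) / fN ω₁ ω₂ (θ₁, θ₂) = v 0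
    rw [hfa, hfn, hadef, mul_div_cancel_left₀ _ hl.ne']
  · show fC ω₁ ω₂ (θ₁, θ₂) / fN ω₁ ω₂ (θ₁, θ₂) = v 1
    rw [hfc, hfn, hcdef, mul_div_cancel_left₀ _ hl.ne']
  · show fE ω₁ ω₂ (θ₁, θ₂) / fN ω₁ ω₂ (θ₁, θ₂) = v 2
    rw [hfe, hfn, hedef, mul_div_cancel_left₀ _ hl.ne']

end SphAux

/-- the quotient of the torus `(ℝ/ω₁ℤ) × (ℝ/ω₂ℤ)` by the involution
`σ₁(θ₁,θ₂) = (−θ₁, ω₂/2−θ₂)`, with the quotient topology, is homeomorphic to the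
unit 2-sphere in `ℝ³`. -/
theorem stmt_2 (ω₁ ω₂ : ℝ) (hω₁ : 0 < ω₁) (hω₂ : 0 < ω₂) :
    Nonempty (Quot (torusRel ω₁ ω₂) ≃ₜ
      (Metric.sphere (0 : EuclideanSpace ℝ (Fin 3)) 1)) := by
  haveI : Fact (0 < ω₁) := ⟨hω₁⟩
  haveI : Fact (0 < ω₂) := ⟨hω₂⟩
  have hmem : ∀ p : AddCircle ω₁ × AddCircle ω₂,
      SphAux.sphMap ω₁ ω₂ p ∈ Metric.sphere (0 : EuclideanSpace ℝ (Fin 3)) 1 := fun p =>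
    mem_sphere_zero_iff_norm.mpr (SphAux.norm_sphMap ω₁ ω₂ p)
  have hsound : ∀ p q, torusRel ω₁ ω₂ p q →
      (⟨SphAux.sphMap ω₁ ω₂ p, hmem p⟩ :
        Metric.sphere (0 : EuclideanSpace ℝ (Fin 3)) 1) = ⟨SphAux.sphMap ω₁ ω₂ q, hmem q⟩ := by
    rintro p q (rfl | rfl)
    · rfl
    · exact Subtype.ext (SphAux.sphMap_invol ω₁ ω₂ hω₂.ne' p).symm
  refine ⟨Continuous.homeoOfEquivCompactToT2
    (f := Equiv.ofBijective
      (Quot.lift (fun p => ⟨SphAux.sphMap ω₁ ω₂ p, hmem p⟩) hsound) ⟨?_, ?_⟩) ?_⟩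
  · intro u v huv
    obtain ⟨p, rfl⟩ := Quot.exists_rep u
    obtain ⟨q, rfl⟩ := Quot.exists_rep v
    have h' : SphAux.sphMap ω₁ ω₂ p = SphAux.sphMap ω₁ ω₂ q := congrArg Subtype.val huv
    exact Quot.sound (SphAux.inj_aux ω₁ ω₂ hω₁.ne' hω₂.ne' h')
  · rintro ⟨w, hw⟩
    obtain ⟨p, hp⟩ := SphAux.surj_aux ω₁ ω₂ hω₁.ne' hω₂.ne' w
      (mem_sphere_zero_iff_norm.mp hw)
    exact ⟨Quot.mk _ p, Subtype.ext hp⟩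
  · exact continuous_quot_lift _ ((SphAux.continuous_sphMap ω₁ ω₂).subtype_mk hmem)
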